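/- For every integer r ≥ 1, deleting the first occurrence of the letter 1 from the word w = 2 1 3 2 1 4 3 2 5 4 3 … (r+1) r (r−1) (r+1) r (whose letter graph with decoder D = {(2,1),(3,2),…,(r+1,r)} is P_{3r+1}) yields a word whose letter graph with the same decoder D is isomorphic to the path P_{3r}; additionally deleting the last occurrence of the letter r+1 yields a word whose letter graph with decoder D is isomorphic to P_{3r−1}. -/

import Mathlib

/-- The letter graph `Γ_D(w)` of a word `w = w₁…wₙ` (positions indexed by `Fin n`) over an
alphabet `α` with decoder `D ⊆ α × α`: distinct positions `i < j` are adjacent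
iff `(w i, w j) ∈ D`. -/
def letterGraph {α : Type*} {n : ℕ} (D : α → α → Prop) (w : Fin n → α) :
    SimpleGraph (Fin n) where
  Adj i j := (i < j ∧ D (w i) (w j)) ∨ (j < i ∧ D (w j) (w i))
  symm := by
    constructor
    intro i j h
    rcases h with h | h
    · exact Or.inr h
    · exact Or.inl h
  loopless := by
    constructor
    intro i h
    rcases h with ⟨h, -⟩ | ⟨h, -⟩ <;> exact absurd h (lt_irrefl i)

/-- A graph `G` is a `k`-letter graph if it is isomorphic to the letter graph of some
word over an alphabet of size `k` (we take the alphabet to be `Fin k`). -/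
def IsKLetterGraph (k : ℕ) {V : Type*} (G : SimpleGraph V) : Prop :=
  ∃ (n : ℕ) (D : Fin k → Fin k → Prop) (w : Fin n → Fin k),
    Nonempty (G ≃g letterGraph D w)

/-- The lettericity of a graph: the least `k` such that `G` is a `k`-letter graph. -/
noncomputable def lettericity {V : Type*} (G : SimpleGraph V) : ℕ :=
  sInf {k | IsKLetterGraph k G}

/-- The graph `rK₂`: the disjoint union of `r` edges (a perfect matching on `2r`
vertices), the edges being `{2t, 2t+1}` for `0 ≤ t < r`. -/
def matchingGraph (r : ℕ) : SimpleGraph (Fin (2 * r)) where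
  Adj i j := i ≠ j ∧ (i : ℕ) / 2 = (j : ℕ) / 2
  symm := by
    constructor
    intro i j h
    exact ⟨h.1.symm, h.2.symm⟩
  loopless := by
    constructor
    intro i h
    exact h.1 rfl

/-- The decoder `D = {(2,1), (3,2), …, (r+1, r)}` (letters named `1, …, r+1` as
natural numbers). -/
def pathDecoder (r : ℕ) (a b : ℕ) : Prop := a = b + 1 ∧ 1 ≤ b ∧ b ≤ r

/-- The word `2 1 3 2 1 4 3 2 5 4 3 … (r+1) r (r−1) (r+1) r` of length `3r+1`:
it begins with `2 1`, then has the blocks `(t+2) (t+1) t` for `t = 1, …, r−1`, and ends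
with `(r+1) r`.  (Position `p` with `2 ≤ p ≤ 3r−2` lies in block `t = (p+1)/3` and
carries the letter `4t + 1 − p`.) -/
def pathWord (r : ℕ) (p : Fin (3 * r + 1)) : ℕ :=
  if (p : ℕ) = 0 then 2
  else if (p : ℕ) = 1 then 1
  else if (p : ℕ) + 2 ≤ 3 * r then 4 * (((p : ℕ) + 1) / 3) + 1 - (p : ℕ)
  else if (p : ℕ) + 1 = 3 * r then r + 1
  else r

/-- Position map realizing the deletion of the first occurrence of the letter `1`
(which sits at position `1`) from a word of length `3r+1`. -/
def delIdx1 (r : ℕ) (p : Fin (3 * r)) : Fin (3 * r + 1) :=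
  if (p : ℕ) = 0 then ⟨0, by omega⟩
  else ⟨(p : ℕ) + 1, by have := p.isLt; omega⟩

/-- Position map realizing the additional deletion of the last occurrence of the letter
`r+1` (which sits at position `3r−1` of the original word) from the word of length `3r`
obtained by `delIdx1`. -/
def delIdx2 (r : ℕ) (p : Fin (3 * r - 1)) : Fin (3 * r + 1) :=
  if (p : ℕ) = 0 then ⟨0, by omega⟩
  else if (p : ℕ) = 3 * r - 2 then ⟨3 * r, by omega⟩
  else ⟨(p : ℕ) + 1, by have := p.isLt; omega⟩

/-- Letter at position `k` of the word after the first deletion. -/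
def L1 (r k : ℕ) : ℕ :=
  if k = 0 then 2
  else if k + 3 ≤ 3 * r then 4 * ((k + 2) / 3) + 1 - (k + 1)
  else if k + 2 = 3 * r then r + 1
  else r

/-- Letter at position `k` of the word after both deletions. -/
def L2 (r k : ℕ) : ℕ :=
  if k = 0 then 2
  else if k = 3 * r - 2 then r
  else 4 * ((k + 2) / 3) + 1 - (k + 1)

/-- The path ordering of the positions of the first deleted word. -/
def g1 (r k : ℕ) : ℕ :=
  if k = 0 then 0
  else if k = 3 * r - 2 then 3 * r - 1
  else if k = 3 * r - 1 then 3 * r - 2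
  else if k % 3 = 1 then k + 2
  else if k % 3 = 2 then k
  else k - 2

/-- The path ordering of the positions of the twice-deleted word. -/
def g2 (r k : ℕ) : ℕ :=
  if k = 0 then 0
  else if k = 3 * r - 2 then 3 * r - 2
  else if k % 3 = 1 then k + 2
  else if k % 3 = 2 then k
  else k - 2

lemma L1_eq (r : ℕ) (hr : 1 ≤ r) (p : Fin (3 * r)) :
    pathWord r (delIdx1 r p) = L1 r p.val := by
  have hp := p.isLt
  unfold pathWord delIdx1 L1
  split_ifs <;> simp_all <;> omega

lemma L2_eq (r : ℕ) (hr : 1 ≤ r) (p : Fin (3 * r - 1)) :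
    pathWord r (delIdx2 r p) = L2 r p.val := by
  have hp := p.isLt
  unfold pathWord delIdx2 L2
  split_ifs <;> simp_all <;> omega

lemma g1_lt (r : ℕ) (hr : 1 ≤ r) {k : ℕ} (hk : k < 3 * r) : g1 r k < 3 * r := by
  unfold g1; split_ifs <;> first | contradiction | omega

set_option maxHeartbeats 1000000 in
lemma g1_invol (r : ℕ) (hr : 1 ≤ r) {k : ℕ} (hk : k < 3 * r) : g1 r (g1 r k) = k := by
  unfold g1; split_ifs <;> first | contradiction | omega

lemma g2_lt (r : ℕ) (hr : 1 ≤ r) {k : ℕ} (hk : k < 3 * r - 1) : g2 r k < 3 * r - 1 := by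
  unfold g2; split_ifs <;> first | contradiction | omega

set_option maxHeartbeats 1000000 in
lemma g2_invol (r : ℕ) (hr : 1 ≤ r) {k : ℕ} (hk : k < 3 * r - 1) : g2 r (g2 r k) = k := by
  unfold g2; split_ifs <;> first | contradiction | omega

/-- Closed form of the letters read along the path order, first word. -/
def h1 (r k : ℕ) : ℕ :=
  if k = 0 then 2
  else if k = 3 * r - 2 then r
  else if k = 3 * r - 1 then r + 1
  else if k % 3 = 1 then k / 3 + 1
  else k / 3 + 2

/-- Closed form of the letters read along the path order, second word. -/
def h2 (r k : ℕ) : ℕ :=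
  if k = 0 then 2
  else if k = 3 * r - 2 then r
  else if k % 3 = 1 then k / 3 + 1
  else k / 3 + 2

set_option maxHeartbeats 1000000 in
lemma h1_eq (r : ℕ) (hr : 1 ≤ r) {k : ℕ} (hk : k < 3 * r) :
    L1 r (g1 r k) = h1 r k := by
  unfold L1 g1 h1; split_ifs <;> first | contradiction | omega

set_option maxHeartbeats 1000000 in
lemma h2_eq (r : ℕ) (hr : 1 ≤ r) {k : ℕ} (hk : k < 3 * r - 1) :
    L2 r (g2 r k) = h2 r k := by
  unfold L2 g2 h2; split_ifs <;> first | contradiction | omega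

set_option maxHeartbeats 1000000 in
lemma key1' (r : ℕ) (hr : 1 ≤ r) {i j : ℕ} (hi : i < 3 * r) (hj : j < 3 * r) :
    ((g1 r i < g1 r j ∧ h1 r i = h1 r j + 1 ∧ 1 ≤ h1 r j ∧ h1 r j ≤ r) ∨
      (g1 r j < g1 r i ∧ h1 r j = h1 r i + 1 ∧ 1 ≤ h1 r i ∧ h1 r i ≤ r)) ↔
    (i + 1 = j ∨ j + 1 = i) := by
  unfold g1 h1; split_ifs <;> first | contradiction | omega

lemma key1 (r : ℕ) (hr : 1 ≤ r) {i j : ℕ} (hi : i < 3 * r) (hj : j < 3 * r) :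
    ((g1 r i < g1 r j ∧ L1 r (g1 r i) = L1 r (g1 r j) + 1 ∧ 1 ≤ L1 r (g1 r j) ∧
        L1 r (g1 r j) ≤ r) ∨
      (g1 r j < g1 r i ∧ L1 r (g1 r j) = L1 r (g1 r i) + 1 ∧ 1 ≤ L1 r (g1 r i) ∧
        L1 r (g1 r i) ≤ r)) ↔ (i + 1 = j ∨ j + 1 = i) := by
  rw [h1_eq r hr hi, h1_eq r hr hj]; exact key1' r hr hi hj

set_option maxHeartbeats 1000000 in
lemma key2' (r : ℕ) (hr : 1 ≤ r) {i j : ℕ} (hi : i < 3 * r - 1) (hj : j < 3 * r - 1) :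
    ((g2 r i < g2 r j ∧ h2 r i = h2 r j + 1 ∧ 1 ≤ h2 r j ∧ h2 r j ≤ r) ∨
      (g2 r j < g2 r i ∧ h2 r j = h2 r i + 1 ∧ 1 ≤ h2 r i ∧ h2 r i ≤ r)) ↔
    (i + 1 = j ∨ j + 1 = i) := by
  unfold g2 h2; split_ifs <;> first | contradiction | omega

lemma key2 (r : ℕ) (hr : 1 ≤ r) {i j : ℕ} (hi : i < 3 * r - 1) (hj : j < 3 * r - 1) :
    ((g2 r i < g2 r j ∧ L2 r (g2 r i) = L2 r (g2 r j) + 1 ∧ 1 ≤ L2 r (g2 r j) ∧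
        L2 r (g2 r j) ≤ r) ∨
      (g2 r j < g2 r i ∧ L2 r (g2 r j) = L2 r (g2 r i) + 1 ∧ 1 ≤ L2 r (g2 r i) ∧
        L2 r (g2 r i) ≤ r)) ↔ (i + 1 = j ∨ j + 1 = i) := by
  rw [h2_eq r hr hi, h2_eq r hr hj]; exact key2' r hr hi hj

lemma letterGraph_adj {α : Type*} {n : ℕ} (D : α → α → Prop) (w : Fin n → α)
    (i j : Fin n) :
    (letterGraph D w).Adj i j ↔ (i < j ∧ D (w i) (w j)) ∨ (j < i ∧ D (w j) (w i)) :=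
  Iff.rfl

/-- Deleting the first occurrence of the letter `1` (at position `1`) from the word
`2 1 3 2 1 4 3 2 5 4 3 … (r+1) r (r−1) (r+1) r` yields a word whose letter graph, with
the same decoder `D = {(2,1), …, (r+1,r)}`, is the path `P_{3r}`; additionally deleting
the last occurrence of the letter `r+1` (at position `3r−1` of the original word) yields
a word whose letter graph is the path `P_{3r−1}`. -/


theorem pathWord_deletions (r : ℕ) (hr : 1 ≤ r) :
    Nonempty (letterGraph (pathDecoder r) (fun p => pathWord r (delIdx1 r p)) ≃g
        SimpleGraph.pathGraph (3 * r)) ∧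
      Nonempty (letterGraph (pathDecoder r) (fun p => pathWord r (delIdx2 r p)) ≃g
        SimpleGraph.pathGraph (3 * r - 1)) := by
  
  constructor
  · refine ⟨(RelIso.symm ?_)⟩
    refine ⟨⟨fun k => ⟨g1 r k.val, g1_lt r hr k.isLt⟩,
      fun k => ⟨g1 r k.val, g1_lt r hr k.isLt⟩, fun k => ?_, fun k => ?_⟩, ?_⟩
    · exact Fin.ext (g1_invol r hr k.isLt)
    · exact Fin.ext (g1_invol r hr k.isLt)
    · intro i j
      simp only [Equiv.coe_fn_mk, letterGraph_adj, pathDecoder, L1_eq r hr,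
        SimpleGraph.pathGraph_adj, Fin.lt_def]
      exact key1 r hr i.isLt j.isLt
  · refine ⟨(RelIso.symm ?_)⟩
    refine ⟨⟨fun k => ⟨g2 r k.val, g2_lt r hr k.isLt⟩,
      fun k => ⟨g2 r k.val, g2_lt r hr k.isLt⟩, fun k => ?_, fun k => ?_⟩, ?_⟩
    · exact Fin.ext (g2_invol r hr k.isLt)
    · exact Fin.ext (g2_invol r hr k.isLt)
    · intro i j
      simp only [Equiv.coe_fn_mk, letterGraph_adj, pathDecoder, L2_eq r hr,
        SimpleGraph.pathGraph_adj, Fin.lt_def]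
      exact key2 r hr i.isLt j.isLt
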